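/- Let A, B ∈ ℝⁿˣⁿ with A invertible and let τ > 0 satisfy τ‖A⁻¹B‖ < 1 - |1 - τ|. Then 0 < τ < 2 and ‖A⁻¹B‖ < (1 - |1-τ|)/τ ≤ 1; moreover for every b ∈ ℝⁿ the GAVE Ax - B|x| = b has a unique solution. -/

import Mathlib

/-- The operator 2-norm of a real square matrix. -/
noncomputable def l2OpNorm {n : ℕ} (A : Matrix (Fin n) (Fin n) ℝ) : ℝ :=
  ‖(Matrix.toEuclideanCLM (𝕜 := ℝ) A :
      EuclideanSpace ℝ (Fin n) →L[ℝ] EuclideanSpace ℝ (Fin n))‖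

lemma abs_lip {n : ℕ} (x y : EuclideanSpace ℝ (Fin n)) :
    ‖((WithLp.equiv 2 _).symm (fun i => |x i|) - (WithLp.equiv 2 _).symm (fun i => |y i|) :
      EuclideanSpace ℝ (Fin n))‖ ≤ ‖x - y‖ := by
  rw [EuclideanSpace.norm_eq, EuclideanSpace.norm_eq]
  apply Real.sqrt_le_sqrt
  apply Finset.sum_le_sum
  intro i _
  have h1 : ((WithLp.equiv 2 _).symm (fun i => |x i|) - (WithLp.equiv 2 _).symm (fun i => |y i|) :
      EuclideanSpace ℝ (Fin n)) i = |x i| - |y i| := rfl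
  have h2 : (x - y : EuclideanSpace ℝ (Fin n)) i = x i - y i := rfl
  rw [h1, h2, Real.norm_eq_abs, Real.norm_eq_abs]
  exact pow_le_pow_left₀ (abs_nonneg _) (abs_abs_sub_abs_le_abs_sub _ _) 2

theorem stmt_18 (n : ℕ) (A B : Matrix (Fin n) (Fin n) ℝ) (hA : IsUnit A)
    (τ : ℝ) (hτ : 0 < τ)
    (h : τ * l2OpNorm (A⁻¹ * B) < 1 - |1 - τ|) :
    (0 < τ ∧ τ < 2) ∧
      l2OpNorm (A⁻¹ * B) < (1 - |1 - τ|) / τ ∧ (1 - |1 - τ|) / τ ≤ 1 ∧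
      ∀ b : Fin n → ℝ,
        ∃! x : Fin n → ℝ, A.mulVec x - B.mulVec (fun i => |x i|) = b := by
  set M := A⁻¹ * B with hM
  have hMnn : 0 ≤ l2OpNorm M := norm_nonneg _
  have habs : |1 - τ| < 1 := by nlinarith
  have hτ2 : τ < 2 := by
    rcases abs_cases (1 - τ) with ⟨he, _⟩ | ⟨he, _⟩ <;> linarith
  have hlt : l2OpNorm M < (1 - |1 - τ|) / τ := by
    rw [lt_div_iff₀ hτ]; linarith [h]
  have hle1 : (1 - |1 - τ|) / τ ≤ 1 := by
    rw [div_le_one hτ]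
    have := le_abs_self (1 - τ)
    linarith
  have hk1 : l2OpNorm M < 1 := hlt.trans_le hle1
  refine ⟨⟨hτ, hτ2⟩, hlt, hle1, fun b => ?_⟩
  -- setup contraction
  have hdet : IsUnit A.det := (Matrix.isUnit_iff_isUnit_det A).mp hA
  have hAinvA : A⁻¹ * A = 1 := Matrix.nonsing_inv_mul A hdet
  have hAAinv : A * A⁻¹ = 1 := Matrix.mul_nonsing_inv A hdet
  set c : EuclideanSpace ℝ (Fin n) := (WithLp.equiv 2 _).symm (A⁻¹.mulVec b) with hc
  set f : EuclideanSpace ℝ (Fin n) → EuclideanSpace ℝ (Fin n) :=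
    fun x => Matrix.toEuclideanCLM (𝕜 := ℝ) M ((WithLp.equiv 2 _).symm (fun i => |x i|)) + c
    with hf
  set K : NNReal := ⟨l2OpNorm M, hMnn⟩ with hK
  have hlip : LipschitzWith K f := by
    rw [lipschitzWith_iff_dist_le_mul]
    intro x y
    rw [dist_eq_norm, dist_eq_norm]
    have : f x - f y = Matrix.toEuclideanCLM (𝕜 := ℝ) M
        ((WithLp.equiv 2 _).symm (fun i => |x i|) - (WithLp.equiv 2 _).symm (fun i => |y i|)) := by
      rw [map_sub]; simp [hf]
    rw [this]
    calc ‖_‖ ≤ l2OpNorm M * ‖((WithLp.equiv 2 _).symm (fun i => |x i|) -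
          (WithLp.equiv 2 _).symm (fun i => |y i|) : EuclideanSpace ℝ (Fin n))‖ :=
          (Matrix.toEuclideanCLM (𝕜 := ℝ) M).le_opNorm _
      _ ≤ l2OpNorm M * ‖x - y‖ := by
          apply mul_le_mul_of_nonneg_left (abs_lip x y) hMnn
  have hcontr : ContractingWith K f := ⟨by exact_mod_cast hk1, hlip⟩
  -- equivalence between the equation and fixed points of f
  have key : ∀ x : Fin n → ℝ,
      (A.mulVec x - B.mulVec (fun i => |x i|) = b) ↔
        Function.IsFixedPt f ((WithLp.equiv 2 _).symm x) := by
    intro x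
    have hfx : f ((WithLp.equiv 2 _).symm x) =
        (WithLp.equiv 2 _).symm (M.mulVec (fun i => |x i|) + A⁻¹.mulVec b) := by
      simp [hf, hc, Matrix.toEuclideanCLM_toLp, Matrix.toLin'_apply]
    rw [Function.IsFixedPt, hfx]
    rw [(WithLp.equiv 2 _).symm.apply_eq_iff_eq]
    constructor
    · intro hx
      have := congrArg (A⁻¹.mulVec ·) hx
      simp only [Matrix.mulVec_sub, Matrix.mulVec_mulVec, hAinvA, Matrix.one_mulVec] at this
      rw [sub_eq_iff_eq_add] at this
      linear_combination this.symm
    · intro hx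
      have := congrArg (A.mulVec ·) hx
      simp only [Matrix.mulVec_add, Matrix.mulVec_mulVec, hM, ← Matrix.mul_assoc, hAAinv,
        Matrix.one_mul, Matrix.one_mulVec] at this
      linear_combination -this
  refine ⟨(WithLp.equiv 2 _) (hcontr.fixedPoint f), ?_, ?_⟩
  · refine (key _).mpr ?_
    rw [Equiv.symm_apply_apply]
    exact hcontr.fixedPoint_isFixedPt
  · intro y hy
    have h2 := hcontr.fixedPoint_unique ((key y).mp hy)
    calc y = (WithLp.equiv 2 _) ((WithLp.equiv 2 _).symm y) := (Equiv.apply_symm_apply _ _).symm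
      _ = _ := congrArg _ h2
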